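/- Let m and n be coprime integers with 0 < m < n, let μ ∈ ℤ^n be dominant, and set η = μ + χ_{m,n} ∈ ℤ^n (that is, η_i = μ_i + ⌊im/n⌋ − ⌊(i−1)m/n⌋ for i ∈ {1,…,n}). Then there is a unique weakly decreasing vector ν ∈ ℚ^n with Σ_{j=1}^n ν_j = Σ_{j=1}^n η_j, with Σ_{j=1}^k ν_j ≥ Σ_{j=1}^k η_j for all k ∈ {1,…,n}, and with Σ_{j=1}^k ν_j = Σ_{j=1}^k η_j for every k ∈ {1,…,n−1} such that ν_k > ν_{k+1} (this ν is the slope sequence of the upper convex hull of the points (k, Σ_{j≤k} η_j), k = 0,…,n). Moreover ν belongs to B(μ,m,n), and every v ∈ B(μ,m,n) satisfies Σ_{j=1}^k v_j ≤ Σ_{j=1}^k ν_j for all k; that is, ν is the greatest element of B(μ,m,n). -/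

import Mathlib

/-- `psum v k` is the partial sum `v₁ + ⋯ + v_k` of the first `k` entries of `v`
(1-indexed; the entry `v_j` for `j ∈ {1,…,n}` is `v ⟨j-1,_⟩`). -/
def psum {n : ℕ} (v : Fin n → ℚ) (k : ℕ) : ℚ :=
  ∑ j ∈ Finset.univ.filter (fun j : Fin n => (j : ℕ) < k), v j

/-- `chi m n i = ⌊im/n⌋ − ⌊(i−1)m/n⌋` (floor division over `ℤ`). -/
def chi (m n : ℕ) (i : ℤ) : ℤ := Int.fdiv (i * m) n - Int.fdiv ((i - 1) * m) n

/-- The set `B(μ, m, n)`: dominant (weakly decreasing) vectors `v ∈ ℚⁿ` such that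
`Σ_{j=1}^n v_j = Σ_{j=1}^n μ_j + m`, `Σ_{j=1}^k v_j ≤ Σ_{j=1}^k μ_j + km/n` for all
`k ∈ {1,…,n-1}`, and `Σ_{j=1}^k v_j ∈ ℤ` for every `k ∈ {1,…,n-1}` with `v_k > v_{k+1}`. -/
def Bset (m n : ℕ) (μ : Fin n → ℤ) : Set (Fin n → ℚ) :=
  {v | Antitone v ∧
    psum v n = psum (fun i => (μ i : ℚ)) n + (m : ℚ) ∧
    (∀ k : ℕ, 1 ≤ k → k ≤ n - 1 →
      psum v k ≤ psum (fun i => (μ i : ℚ)) k + ((k : ℚ) * (m : ℚ)) / (n : ℚ)) ∧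
    (∀ j : Fin n, ∀ h : (j : ℕ) + 1 < n,
      v ⟨(j : ℕ) + 1, h⟩ < v j → ∃ z : ℤ, psum v ((j : ℕ) + 1) = (z : ℚ))}

/-- `ν` is the slope sequence of the upper convex hull of the points
`(k, Σ_{j≤k} η_j)`: it is weakly decreasing, has the same total sum as `η`, its partial
sums dominate those of `η`, and its partial sums agree with those of `η` at every strict
descent `ν_k > ν_{k+1}` (`k ∈ {1,…,n-1}`). -/
def IsSlopeSeq {n : ℕ} (η ν : Fin n → ℚ) : Prop :=
  Antitone ν ∧ psum ν n = psum η n ∧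
  (∀ k : ℕ, k ≤ n → psum η k ≤ psum ν k) ∧
  (∀ j : Fin n, ∀ h : (j : ℕ) + 1 < n,
    ν ⟨(j : ℕ) + 1, h⟩ < ν j → psum ν ((j : ℕ) + 1) = psum η ((j : ℕ) + 1))

/-! ### Auxiliary lemmas about `psum` -/

lemma psum_zero {n : ℕ} (v : Fin n → ℚ) : psum v 0 = 0 := by
  unfold psum
  apply Finset.sum_eq_zero
  intro j hj; simp at hj

lemma psum_succ {n : ℕ} (v : Fin n → ℚ) (k : ℕ) (hk : k < n) :
    psum v (k+1) = psum v k + v ⟨k, hk⟩ := by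
  unfold psum
  have : Finset.univ.filter (fun j : Fin n => (j : ℕ) < k+1)
      = insert ⟨k, hk⟩ (Finset.univ.filter (fun j : Fin n => (j : ℕ) < k)) := by
    ext j; simp [Finset.mem_filter, Fin.ext_iff]; omega
  rw [this, Finset.sum_insert (by simp)]
  ring

lemma psum_eq_range {n : ℕ} (v : Fin n → ℚ) (w : ℕ → ℚ)
    (hw : ∀ j : Fin n, v j = w ((j : ℕ) + 1)) :
    ∀ k, k ≤ n → psum v k = ∑ i ∈ Finset.range k, w (i+1) := by
  intro k
  induction k with
  | zero => intro _; simp [psum_zero]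
  | succ k ih =>
    intro hk
    rw [psum_succ v k hk, Finset.sum_range_succ, ih (by omega), hw ⟨k, hk⟩]

lemma psum_add {n : ℕ} (f g : Fin n → ℚ) (k : ℕ) :
    psum (fun i => f i + g i) k = psum f k + psum g k := by
  unfold psum
  exact Finset.sum_add_distrib

lemma psum_const {n : ℕ} (c : ℚ) (k : ℕ) (hk : k ≤ n) :
    psum (fun _ : Fin n => c) k = k * c := by
  rw [psum_eq_range (fun _ : Fin n => c) (fun _ => c) (fun _ => rfl) k hk]
  simp [mul_comm]

lemma psum_int {n : ℕ} (μ : Fin n → ℤ) (k : ℕ) :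
    psum (fun i => (μ i : ℚ)) k
      = ((∑ j ∈ Finset.univ.filter (fun j : Fin n => (j : ℕ) < k), μ j : ℤ) : ℚ) := by
  unfold psum
  push_cast
  rfl

/-! ### The comparison lemma -/

lemma psum_cmp {n : ℕ} (v u : Fin n → ℚ) (hu : Antitone u)
    (hn : psum v n ≤ psum u n)
    (hd : ∀ j : Fin n, ∀ h : (j : ℕ) + 1 < n,
      v ⟨(j : ℕ) + 1, h⟩ < v j → psum v ((j : ℕ) + 1) ≤ psum u ((j : ℕ) + 1)) :
    ∀ k, k ≤ n → psum v k ≤ psum u k := by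
  by_contra hcon
  push_neg at hcon
  obtain ⟨k₀, hk₀n, hk₀⟩ := hcon
  set D : ℕ → ℚ := fun k => psum v k - psum u k with hD
  have hne : (Finset.range (n+1)).Nonempty := ⟨0, by simp⟩
  set M : ℚ := (Finset.range (n+1)).sup' hne D with hM
  have hle : ∀ k, k ≤ n → D k ≤ M := fun k hk =>
    Finset.le_sup' D (by simp [Finset.mem_range]; omega)
  have hMpos : 0 < M := lt_of_lt_of_le (by simp [hD]; linarith) (hle k₀ hk₀n)
  set Kset := (Finset.range (n+1)).filter (fun k => D k = M) with hK
  have hKne : Kset.Nonempty := by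
    obtain ⟨i, hi, hieq⟩ := Finset.exists_mem_eq_sup' hne D
    exact ⟨i, by simp [hK, Finset.mem_filter, hi, hieq.symm, hM]⟩
  set k := Kset.min' hKne with hk
  have hkmem : k ∈ Kset := Finset.min'_mem _ _
  have hkn : k ≤ n := by
    have := (Finset.mem_filter.mp hkmem).1; simp [Finset.mem_range] at this; omega
  have hkM : D k = M := (Finset.mem_filter.mp hkmem).2
  have hk0 : k ≠ 0 := by
    intro h; rw [h] at hkM; simp [hD, psum_zero] at hkM; linarith
  have hkne' : k ≠ n := by
    intro h; rw [h] at hkM; have : D n ≤ 0 := by simp [hD]; linarith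
    linarith [hkM ▸ this]
  have hmin : ∀ x ∈ Kset, k ≤ x := fun x hx => Finset.min'_le _ _ hx
  clear_value k
  obtain ⟨j, rfl⟩ : ∃ j, k = j + 1 := ⟨k - 1, by omega⟩
  have hjn : j + 1 < n := by omega
  have hjn' : j < n := by omega
  have hprev : D j < M := by
    rcases lt_or_eq_of_le (hle j (by omega)) with h | h
    · exact h
    · exfalso
      have : j + 1 ≤ j := hmin j
        (Finset.mem_filter.mpr ⟨by simp [Finset.mem_range]; omega, h⟩)
      omega
  have hnext : D (j + 2) ≤ M := hle _ (by omega)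
  have e1 : psum v (j+1) = psum v j + v ⟨j, hjn'⟩ := psum_succ v j hjn'
  have e1' : psum u (j+1) = psum u j + u ⟨j, hjn'⟩ := psum_succ u j hjn'
  have e2 : psum v (j+2) = psum v (j+1) + v ⟨j+1, hjn⟩ := psum_succ v (j+1) hjn
  have e2' : psum u (j+2) = psum u (j+1) + u ⟨j+1, hjn⟩ := psum_succ u (j+1) hjn
  have hgt : u ⟨j, hjn'⟩ < v ⟨j, hjn'⟩ := by
    have : D j + (v ⟨j, hjn'⟩ - u ⟨j, hjn'⟩) = D (j+1) := by simp [hD, e1, e1']; ring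
    have := hkM; simp [hD] at this ⊢; nlinarith [hprev, hkM]
  have hlt : v ⟨j+1, hjn⟩ ≤ u ⟨j+1, hjn⟩ := by
    have : D (j+2) = D (j+1) + (v ⟨j+1, hjn⟩ - u ⟨j+1, hjn⟩) := by
      simp [hD, e2, e2']; ring
    nlinarith [hnext, hkM]
  have huu : u ⟨j+1, hjn⟩ ≤ u ⟨j, hjn'⟩ := hu (by simp [Fin.le_def])
  have hdesc : v ⟨j+1, hjn⟩ < v ⟨j, hjn'⟩ := lt_of_le_of_lt (le_trans hlt huu) hgt
  have := hd ⟨j, hjn'⟩ hjn hdesc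
  simp at this
  have : D (j+1) ≤ 0 := by simp [hD]; linarith
  linarith [hkM ▸ this]

/-! ### Existence of the concave hull slope sequence (on `ℕ`) -/

def SS (w : ℕ → ℚ) (k : ℕ) : ℚ := ∑ i ∈ Finset.range k, w (i+1)

lemma exists_hull : ∀ n (F : ℕ → ℚ), F 0 = 0 →
    ∃ w : ℕ → ℚ,
      (∀ i j, 1 ≤ i → i ≤ j → j ≤ n → w j ≤ w i) ∧
      (∀ k, k ≤ n → F k ≤ SS w k) ∧
      SS w n = F n ∧
      (∀ k, 1 ≤ k → k < n → w (k+1) < w k → SS w k = F k) := by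
  intro n
  induction n using Nat.strong_induction_on with
  | _ n IH =>
    intro F hF0
    rcases Nat.eq_zero_or_pos n with hn0 | hn
    · subst hn0
      exact ⟨fun _ => 0, fun i j h1 h2 h3 => by omega,
        fun k hk => by simp at hk; simp [hk, SS, hF0],
        by simp [SS, hF0], fun k h1 h2 => by omega⟩
    -- n ≥ 1
    have hne : (Finset.Icc 1 n).Nonempty := ⟨1, by simp; omega⟩
    set s : ℚ := (Finset.Icc 1 n).sup' hne (fun k : ℕ => F k / (k:ℚ)) with hs
    have hsle : ∀ k, 1 ≤ k → k ≤ n → F k ≤ k * s := by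
      intro k h1 h2
      have : F k / (k:ℚ) ≤ s := Finset.le_sup' (fun k : ℕ => F k / (k:ℚ)) (by simp [Finset.mem_Icc]; omega)
      have hkpos : (0:ℚ) < k := by exact_mod_cast h1
      rw [div_le_iff₀ hkpos] at this; linarith
    set Kset := (Finset.Icc 1 n).filter (fun k : ℕ => F k / (k:ℚ) = s) with hK
    have hKne : Kset.Nonempty := by
      obtain ⟨i, hi, hieq⟩ := Finset.exists_mem_eq_sup' hne (fun k : ℕ => F k / (k:ℚ))
      exact ⟨i, Finset.mem_filter.mpr ⟨hi, hieq.symm⟩⟩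
    set b := Kset.max' hKne with hb
    have hbmem : b ∈ Kset := Finset.max'_mem _ _
    have hb1 : 1 ≤ b := by
      have := (Finset.mem_filter.mp hbmem).1; simp [Finset.mem_Icc] at this; omega
    have hbn : b ≤ n := by
      have := (Finset.mem_filter.mp hbmem).1; simp [Finset.mem_Icc] at this; omega
    have hbpos : (0:ℚ) < b := by exact_mod_cast hb1
    have hFb : F b = b * s := by
      have := (Finset.mem_filter.mp hbmem).2
      field_simp at this; linarith [this]
    have hstrict : ∀ c, b < c → c ≤ n → F c < c * s := by
      intro c hc1 hc2
      have hcpos : (0:ℚ) < c := by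
        have : 0 < c := by omega
        exact_mod_cast this
      rcases lt_or_eq_of_le (hsle c (by omega) hc2) with h | h
      · exact h
      · exfalso
        have : c ∈ Kset := Finset.mem_filter.mpr ⟨by simp [Finset.mem_Icc]; omega,
          by field_simp; linarith⟩
        have := Finset.le_max' _ c this
        omega
    -- inductive call
    set G : ℕ → ℚ := fun k => F (b + k) - F b with hG
    have hGm : n - b < n := by omega
    obtain ⟨w', hw'anti, hw'ge, hw'sum, hw'desc⟩ := IH (n - b) hGm G (by simp [hG])
    -- all slopes of w' are < s
    have hw'lt : ∀ j, 1 ≤ j → j ≤ n - b → w' j < s := by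
      intro j hj1 hj2
      have hm1 : 1 ≤ n - b := by omega
      suffices h : w' 1 < s by
        exact lt_of_le_of_lt (hw'anti 1 j le_rfl hj1 hj2) h
      -- let d be the largest index in [1, n-b] with w' d = w' 1
      set Dset := (Finset.Icc 1 (n - b)).filter (fun d => w' d = w' 1) with hD
      have hDne : Dset.Nonempty := ⟨1, Finset.mem_filter.mpr ⟨by simp [Finset.mem_Icc]; omega, rfl⟩⟩
      set d := Dset.max' hDne with hd
      have hdmem : d ∈ Dset := Finset.max'_mem _ _
      have hd1 : 1 ≤ d := by
        have := (Finset.mem_filter.mp hdmem).1; simp [Finset.mem_Icc] at this; omega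
      have hdm : d ≤ n - b := by
        have := (Finset.mem_filter.mp hdmem).1; simp [Finset.mem_Icc] at this; omega
      have hdval : w' d = w' 1 := (Finset.mem_filter.mp hdmem).2
      have hconst : ∀ i, 1 ≤ i → i ≤ d → w' i = w' 1 := by
        intro i h1 h2
        have le1 : w' i ≤ w' 1 := hw'anti 1 i le_rfl h1 (by omega)
        have le2 : w' d ≤ w' i := hw'anti i d h1 h2 hdm
        linarith [hdval]
      have hSSd : SS w' d = d * w' 1 := by
        have hc : ∀ i ∈ Finset.range d, w' (i+1) = w' 1 := by
          intro i hi
          simp [Finset.mem_range] at hi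
          exact hconst (i+1) (by omega) (by omega)
        rw [SS, Finset.sum_congr rfl hc, Finset.sum_const]
        simp [mul_comm]
      have key : SS w' d = G d := by
        rcases lt_or_eq_of_le hdm with h | h
        · -- descent at d
          have hlt : w' (d+1) < w' d := by
            have hle' : w' (d+1) ≤ w' d := hw'anti d (d+1) hd1 (by omega) (by omega)
            rcases lt_or_eq_of_le hle' with h' | h'
            · exact h'
            · exfalso
              have : (d+1) ∈ Dset := Finset.mem_filter.mpr
                ⟨by simp [Finset.mem_Icc]; omega, by rw [h', hdval]⟩
              have := Finset.le_max' _ _ this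
              omega
          exact hw'desc d hd1 h hlt
        · rw [h]; exact hw'sum
      -- G d < d * s
      have hGd : G d < d * s := by
        have h9 : F (b + d) < ((b + d : ℕ) : ℚ) * s := hstrict (b + d) (by omega) (by omega)
        push_cast at h9
        simp only [hG]
        rw [hFb]
        nlinarith [h9]
      have hdpos : (0:ℚ) < d := by exact_mod_cast hd1
      nlinarith [hSSd, key, hGd, hdpos]
    -- define w
    set w : ℕ → ℚ := fun i => if i ≤ b then s else w' (i - b) with hw
    have hSSb : ∀ k, k ≤ b → SS w k = k * s := by
      intro k hk
      have hc : ∀ i ∈ Finset.range k, w (i+1) = s := by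
        intro i hi
        simp [Finset.mem_range] at hi
        simp [hw, show i + 1 ≤ b by omega]
      rw [SS, Finset.sum_congr rfl hc, Finset.sum_const]
      simp [mul_comm]
    have hSSglue : ∀ k, SS w (b + k) = F b + SS w' k := by
      intro k
      rw [SS, Finset.sum_range_add]
      have h1 : ∑ i ∈ Finset.range b, w (i+1) = b * s := hSSb b le_rfl
      have h2 : ∑ i ∈ Finset.range k, w (b + i + 1) = SS w' k := by
        apply Finset.sum_congr rfl
        intro i _
        simp [hw, show ¬ (b + i + 1 ≤ b) by omega, show b + i + 1 - b = i + 1 by omega]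
      rw [h1, h2, hFb]
    refine ⟨w, ?_, ?_, ?_, ?_⟩
    · -- antitone
      intro i j h1 h2 h3
      rcases le_or_gt j b with hj | hj
      · simp [hw, show i ≤ b by omega, hj]
      · rcases le_or_gt i b with hi | hi
        · simp only [hw]
          rw [if_pos hi, if_neg (by omega)]
          exact le_of_lt (hw'lt (j - b) (by omega) (by omega))
        · simp only [hw]
          rw [if_neg (by omega), if_neg (by omega)]
          exact hw'anti (i - b) (j - b) (by omega) (by omega) (by omega)
    · -- F k ≤ SS w k
      intro k hk
      rcases Nat.eq_zero_or_pos k with h0 | hk1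
      · simp [h0, SS, hF0]
      rcases le_or_gt k b with hkb | hkb
      · rw [hSSb k hkb]; exact hsle k hk1 hk
      · have e : b + (k - b) = k := by omega
        have h3 := hw'ge (k - b) (by omega)
        simp only [hG] at h3
        rw [e] at h3
        calc F k ≤ F b + SS w' (k - b) := by linarith
          _ = SS w (b + (k - b)) := (hSSglue _).symm
          _ = SS w k := by rw [e]
    · -- total sum
      have e : b + (n - b) = n := by omega
      calc SS w n = SS w (b + (n - b)) := by rw [e]
        _ = F b + SS w' (n - b) := hSSglue _
        _ = F b + G (n - b) := by rw [hw'sum]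
        _ = F n := by simp only [hG]; rw [e]; ring
    · -- descents
      intro k hk1 hk2 hdesc
      rcases lt_or_ge k b with hkb | hkb
      · exfalso
        simp [hw, show k ≤ b by omega, show k + 1 ≤ b by omega] at hdesc
      rcases Nat.eq_or_lt_of_le hkb with hkb' | hkb'
      · rw [← hkb', hSSb b le_rfl, hFb]
      · have e : b + (k - b) = k := by omega
        have hd' : w' (k - b + 1) < w' (k - b) := by
          have e1 : w k = w' (k - b) := by simp [hw, show ¬ k ≤ b by omega]
          have e2 : w (k+1) = w' (k - b + 1) := by
            simp [hw, show ¬ k + 1 ≤ b by omega, show k + 1 - b = k - b + 1 by omega]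
          rw [e1, e2] at hdesc; exact hdesc
        have h4 := hw'desc (k - b) (by omega) (by omega) hd'
        calc SS w k = SS w (b + (k - b)) := by rw [e]
          _ = F b + SS w' (k - b) := hSSglue _
          _ = F b + G (k - b) := by rw [h4]
          _ = F k := by simp only [hG]; rw [e]; ring

/-! ### Arithmetic facts about `chi` and floors -/

lemma chi_sum (m n k : ℕ) :
    ∑ i ∈ Finset.range k, chi m n (((i+1 : ℕ) : ℤ)) = (((k*m : ℕ) : ℤ)).fdiv n := by
  induction k with
  | zero => simp [Int.zero_fdiv]
  | succ k ih =>
    rw [Finset.sum_range_succ, ih, chi]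
    have e1 : (((k+1 : ℕ) : ℤ)) - 1 = ((k : ℕ) : ℤ) := by push_cast; ring
    rw [e1]
    have e2 : (((k+1 : ℕ) : ℤ)) * (m : ℤ) = (((k+1)*m : ℕ) : ℤ) := by push_cast; ring
    have e3 : ((k : ℕ) : ℤ) * (m : ℤ) = ((k*m : ℕ) : ℤ) := by push_cast; ring
    rw [e2, e3]
    ring

lemma fdiv_le (m n k : ℕ) (hn : 0 < n) :
    (((((k*m : ℕ) : ℤ)).fdiv n : ℤ) : ℚ) ≤ ((k : ℚ) * m) / n := by
  rw [Int.fdiv_eq_ediv_of_nonneg _ (by exact_mod_cast Nat.zero_le n)]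
  have hnz : (0:ℤ) < (n:ℤ) := by exact_mod_cast hn
  have h := (Int.le_ediv_iff_mul_le hnz (a := ((k*m:ℕ):ℤ) / (n:ℤ)) (b := ((k*m:ℕ):ℤ))).mp le_rfl
  have hq : ((((k*m:ℕ):ℤ) / (n:ℤ) : ℤ) : ℚ) * (n:ℚ) ≤ ((k:ℚ) * m) := by
    exact_mod_cast h
  have hnq : (0:ℚ) < n := by exact_mod_cast hn
  rw [le_div_iff₀ hnq]
  exact hq

lemma le_fdiv (m n k : ℕ) (hn : 0 < n) (z : ℤ) (h : (z : ℚ) ≤ ((k : ℚ) * m) / n) :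
    z ≤ (((k*m : ℕ) : ℤ)).fdiv n := by
  rw [Int.fdiv_eq_ediv_of_nonneg _ (by exact_mod_cast Nat.zero_le n)]
  have hnz : (0:ℤ) < (n:ℤ) := by exact_mod_cast hn
  rw [Int.le_ediv_iff_mul_le hnz]
  have hnq : (0:ℚ) < n := by exact_mod_cast hn
  rw [le_div_iff₀ hnq] at h
  exact_mod_cast h

lemma fdiv_total (m n : ℕ) (hn : 0 < n) : (((n*m : ℕ) : ℤ)).fdiv n = m := by
  rw [Int.fdiv_eq_ediv_of_nonneg _ (by exact_mod_cast Nat.zero_le n)]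
  have : ((n*m : ℕ) : ℤ) = (n:ℤ) * m := by push_cast; ring
  rw [this, Int.mul_ediv_cancel_left _ (by exact_mod_cast hn.ne')]

/-! ### The main theorem -/

theorem slope_sequence_is_maximal (m n : ℕ) (hm : 0 < m) (hmn : m < n)
    (hcop : Nat.Coprime m n) (μ : Fin n → ℤ) (hμ : Antitone μ) :
    ∃ ν : Fin n → ℚ,
      IsSlopeSeq (fun i => (μ i : ℚ) + (chi m n ((i : ℕ) + 1) : ℚ)) ν ∧
      (∀ ν' : Fin n → ℚ,
        IsSlopeSeq (fun i => (μ i : ℚ) + (chi m n ((i : ℕ) + 1) : ℚ)) ν' → ν' = ν) ∧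
      ν ∈ Bset m n μ ∧
      (∀ v ∈ Bset m n μ, ∀ k : ℕ, 1 ≤ k → k ≤ n → psum v k ≤ psum ν k) := by
  have hn : 0 < n := lt_trans hm hmn
  set η : Fin n → ℚ := fun i => (μ i : ℚ) + (chi m n ((i : ℕ) + 1) : ℚ) with hη
  set μQ : Fin n → ℚ := fun i => (μ i : ℚ) with hμQ
  set fd : ℕ → ℤ := fun k => (((k*m : ℕ) : ℤ)).fdiv n with hfd
  -- partial sums of η
  have hchi : ∀ k, k ≤ n →
      psum (fun i : Fin n => (chi m n ((i : ℕ) + 1) : ℚ)) k = ((fd k : ℤ) : ℚ) := by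
    intro k hk
    rw [psum_eq_range (fun i : Fin n => (chi m n ((i : ℕ) + 1) : ℚ))
      (fun i => (chi m n (i : ℤ) : ℚ)) (fun j => by norm_num) k hk]
    simp only [hfd]
    exact_mod_cast chi_sum m n k
  have hηk : ∀ k, k ≤ n → psum η k = psum μQ k + ((fd k : ℤ) : ℚ) := by
    intro k hk
    rw [hη, psum_add, hchi k hk]
  -- existence via exists_hull
  obtain ⟨w, hanti, hge, hsum, hdesc⟩ := exists_hull n (fun k => psum η k) (psum_zero η)
  set ν : Fin n → ℚ := fun j => w ((j : ℕ) + 1) with hν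
  have hps : ∀ k, k ≤ n → psum ν k = SS w k :=
    psum_eq_range ν w (fun j => rfl)
  have hνanti : Antitone ν := by
    intro a b hab
    exact hanti ((a : ℕ)+1) ((b : ℕ)+1) (by omega) (by exact_mod_cast Nat.add_le_add_right hab 1)
      (by omega)
  have hS : IsSlopeSeq η ν := by
    refine ⟨hνanti, ?_, ?_, ?_⟩
    · rw [hps n le_rfl]; exact hsum
    · intro k hk; rw [hps k hk]; exact hge k hk
    · intro j h hlt
      rw [hps ((j : ℕ)+1) (by omega)]
      exact hdesc ((j : ℕ)+1) (by omega) h hlt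
  -- key bounds at descents of any element satisfying the B-style inequalities
  have hηle : ∀ k, k ≤ n → psum η k ≤ psum μQ k + ((k : ℚ) * m) / n := by
    intro k hk
    rw [hηk k hk]
    have := fdiv_le m n k hn
    simp only [hfd]
    linarith
  refine ⟨ν, hS, ?_, ?_, ?_⟩
  · -- uniqueness
    intro ν' hS'
    obtain ⟨hνa', hsum', hge', hdesc'⟩ := hS'
    obtain ⟨_, hsumν, hgeν, hdescν⟩ := hS
    have h1 : ∀ k, k ≤ n → psum ν' k ≤ psum ν k := by
      apply psum_cmp ν' ν hνanti (by rw [hsum', hsumν])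
      intro j h hlt
      rw [hdesc' j h hlt]
      exact hgeν ((j : ℕ)+1) (by omega)
    have h2 : ∀ k, k ≤ n → psum ν k ≤ psum ν' k := by
      apply psum_cmp ν ν' hνa' (by rw [hsum', hsumν])
      intro j h hlt
      rw [hdescν j h hlt]
      exact hge' ((j : ℕ)+1) (by omega)
    have heq : ∀ k, k ≤ n → psum ν' k = psum ν k :=
      fun k hk => le_antisymm (h1 k hk) (h2 k hk)
    funext j
    have e1 : psum ν' ((j:ℕ)+1) = psum ν' (j:ℕ) + ν' ⟨(j:ℕ), j.isLt⟩ := psum_succ ν' _ j.isLt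
    have e2 : psum ν ((j:ℕ)+1) = psum ν (j:ℕ) + ν ⟨(j:ℕ), j.isLt⟩ := psum_succ ν _ j.isLt
    have q1 := heq ((j:ℕ)+1) (by omega)
    have q2 := heq (j:ℕ) (by omega)
    have : ν' ⟨(j:ℕ), j.isLt⟩ = ν ⟨(j:ℕ), j.isLt⟩ := by linarith
    simpa using this
  · -- membership in Bset
    obtain ⟨_, hsumν, hgeν, hdescν⟩ := hS
    have htot : psum ν n = psum μQ n + (m : ℚ) := by
      rw [hsumν, hηk n le_rfl]
      simp only [hfd]
      rw [fdiv_total m n hn]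
      norm_cast
    refine ⟨hνanti, htot, ?_, ?_⟩
    · -- dominance bound
      intro k hk1 hk2
      set u : Fin n → ℚ := fun i => (μ i : ℚ) + (m : ℚ)/n with hu
      have huanti : Antitone u := by
        intro a b hab
        have : (μ b : ℚ) ≤ (μ a : ℚ) := by exact_mod_cast hμ hab
        simp only [hu]
        linarith
      have huk : ∀ j, j ≤ n → psum u j = psum μQ j + (j : ℚ) * ((m:ℚ)/n) := by
        intro j hj
        rw [hu, psum_add, psum_const _ j hj]
      have hcmp : ∀ j, j ≤ n → psum ν j ≤ psum u j := by
        apply psum_cmp ν u huanti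
        · rw [htot, huk n le_rfl]
          have : (n : ℚ) ≠ 0 := by positivity
          field_simp
          exact le_rfl
        · intro j h hlt
          rw [hdescν j h hlt, huk ((j:ℕ)+1) (by omega)]
          have := hηle ((j:ℕ)+1) (by omega)
          have e : (((j:ℕ)+1 : ℚ)) * ((m:ℚ)/n) = (((j:ℕ)+1 : ℚ) * m) / n := by ring
          push_cast at this ⊢
          linarith
      have := hcmp k (by omega)
      rw [huk k (by omega)] at this
      have e : (k : ℚ) * ((m:ℚ)/n) = ((k:ℚ) * m) / n := by ring
      linarith [e ▸ this]
    · -- integrality at descents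
      intro j h hlt
      rw [hdescν j h hlt, hηk ((j:ℕ)+1) (by omega)]
      refine ⟨(∑ i ∈ Finset.univ.filter (fun i : Fin n => (i : ℕ) < (j:ℕ)+1), μ i)
        + fd ((j:ℕ)+1), ?_⟩
      rw [psum_int μ ((j:ℕ)+1)]
      push_cast
      ring
  · -- maximality
    intro v hv k hk1 hk2
    obtain ⟨hvanti, hvsum, hvbd, hvint⟩ := hv
    obtain ⟨_, hsumν, hgeν, hdescν⟩ := hS
    have htot : psum ν n = psum μQ n + (m : ℚ) := by
      rw [hsumν, hηk n le_rfl]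
      simp only [hfd]
      rw [fdiv_total m n hn]
      norm_cast
    refine psum_cmp v ν hνanti (by rw [htot, hvsum]) ?_ k hk2
    intro j h hlt
    obtain ⟨z, hz⟩ := hvint j h hlt
    have hbd := hvbd ((j:ℕ)+1) (by omega) (by omega)
    rw [hz, psum_int μ ((j:ℕ)+1)] at hbd
    set Z : ℤ := ∑ i ∈ Finset.univ.filter (fun i : Fin n => (i : ℕ) < (j:ℕ)+1), μ i with hZ
    have hzZ : ((z - Z : ℤ) : ℚ) ≤ ((((j:ℕ)+1 : ℕ) : ℚ) * m) / n := by
      push_cast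
      push_cast at hbd
      linarith
    have := le_fdiv m n ((j:ℕ)+1) hn (z - Z) hzZ
    have hfin : psum v ((j:ℕ)+1) ≤ psum η ((j:ℕ)+1) := by
      rw [hz, hηk ((j:ℕ)+1) (by omega), psum_int μ ((j:ℕ)+1), ← hZ]
      have : ((z - Z : ℤ) : ℚ) ≤ ((fd ((j:ℕ)+1) : ℤ) : ℚ) := by exact_mod_cast this
      push_cast at this ⊢
      linarith
    exact le_trans hfin (hgeν ((j:ℕ)+1) (by omega))
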